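/- arXiv:1204.4845 — 5 statements merged into one kernel-verified Lean document; each statement's English description precedes it below -/
import Mathlib

section
/- Let n ≥ 1, let μ : Fin n → ℝ satisfy 0 ≤ μ_j for all j and ∑_j μ_j = 1, and set v = ∑_j μ_j e_j where (e_1, …, e_n) is the standard basis of ℝ^n. Let S be the convex hull of {e_1, …, e_n} and, for each j, let A_j be the convex hull of {e_k : k ≠ j} ∪ {v}. Then the union ⋃_j A_j equals S. -/
/-- With `S` the convex hull of the standard basis of `ℝ^n` and
`A j` the convex hull of `{e k : k ≠ j} ∪ {v}`, where `v = ∑ j, μ j • e j` for a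
nonnegative `μ` summing to `1`, the union of the `A j` equals `S`. -/
theorem stmt2 (n : ℕ) (hn : 1 ≤ n) (μ : Fin n → ℝ)
    (hμ0 : ∀ j, 0 ≤ μ j) (hμ1 : ∑ j, μ j = 1)
    (e : Fin n → EuclideanSpace ℝ (Fin n))
    (he : ∀ j, e j = EuclideanSpace.single j (1 : ℝ))
    (v : EuclideanSpace ℝ (Fin n)) (hv : v = ∑ j, μ j • e j)
    (S : Set (EuclideanSpace ℝ (Fin n))) (hS : S = convexHull ℝ (Set.range e))
    (A : Fin n → Set (EuclideanSpace ℝ (Fin n)))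
    (hA : ∀ j, A j = convexHull ℝ ((e '' {k | k ≠ j}) ∪ {v})) :
    (⋃ j, A j) = S := by
  have hSconv : Convex ℝ S := hS ▸ convex_convexHull ℝ _
  have heS : ∀ j, e j ∈ S := fun j => hS ▸ subset_convexHull ℝ _ ⟨j, rfl⟩
  have hvS : v ∈ S := by
    rw [hv]
    exact hSconv.sum_mem (fun i _ => hμ0 i) hμ1 (fun i _ => heS i)
  -- representation lemma: any x equals ∑ x i • e i
  have hrep : ∀ x : EuclideanSpace ℝ (Fin n), (∑ i, x i • e i) = x := by
    intro x
    ext j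
    have : (∑ i, x i • e i) j = ∑ i, (x i • e i) j := by
      rw [WithLp.ofLp_sum]; exact Finset.sum_apply j Finset.univ _
    rw [this]
    simp [he, EuclideanSpace.single_apply]
  -- the coordinate description of S
  have hTconv : Convex ℝ {y : EuclideanSpace ℝ (Fin n) |
      (∀ i, 0 ≤ y i) ∧ ∑ i, y i = 1} := by
    intro y hy z hz a b ha hb hab
    have happ : ∀ i, (a • y + b • z) i = a * y i + b * z i := fun i => rfl
    constructor
    · intro i
      rw [happ]
      have := hy.1 i; have := hz.1 i; positivity
    · simp only [happ, Finset.sum_add_distrib, ← Finset.mul_sum, hy.2, hz.2]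
      linarith
  have hST : S ⊆ {y : EuclideanSpace ℝ (Fin n) | (∀ i, 0 ≤ y i) ∧ ∑ i, y i = 1} := by
    rw [hS]
    apply convexHull_min _ hTconv
    rintro _ ⟨j, rfl⟩
    constructor
    · intro i
      rw [he]
      rw [EuclideanSpace.single_apply]
      positivity
    · simp [he, EuclideanSpace.single_apply]
  apply Set.eq_of_subset_of_subset
  · -- ⋃ A j ⊆ S
    apply Set.iUnion_subset
    intro j
    rw [hA]
    apply convexHull_min _ hSconv
    rintro x (⟨k, _, rfl⟩ | hx)
    · exact heS k
    · rw [Set.mem_singleton_iff.mp hx]; exact hvS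
  · -- S ⊆ ⋃ A j
    intro x hxS
    obtain ⟨hx0, hx1⟩ := hST hxS
    -- pick j0 minimizing x j / μ j over {j | 0 < μ j}
    have hFne : (Finset.univ.filter fun j => 0 < μ j).Nonempty := by
      by_contra h
      rw [Finset.not_nonempty_iff_eq_empty] at h
      have : ∑ j, μ j = 0 := by
        apply Finset.sum_eq_zero
        intro j _
        by_contra hj
        have : 0 < μ j := lt_of_le_of_ne (hμ0 j) (Ne.symm hj)
        have : j ∈ Finset.univ.filter fun j => 0 < μ j := by simp [this]
        simp [h] at this
      rw [hμ1] at this; norm_num at this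
    obtain ⟨j0, hj0mem, hj0min⟩ :=
      Finset.exists_min_image _ (fun j => x j / μ j) hFne
    have hμj0 : 0 < μ j0 := (Finset.mem_filter.mp hj0mem).2
    set t : ℝ := x j0 / μ j0 with ht
    have ht0 : 0 ≤ t := div_nonneg (hx0 j0) hμj0.le
    have htmul : ∀ k, t * μ k ≤ x k := by
      intro k
      rcases lt_or_ge 0 (μ k) with hk | hk
      · have h := hj0min k (by simp [hk])
        rw [ht, div_le_div_iff₀ hμj0 hk] at h
        rw [ht, div_mul_eq_mul_div, div_le_iff₀ hμj0]
        linarith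
      · have hk0 : μ k = 0 := le_antisymm hk (hμ0 k)
        rw [hk0]; simpa using hx0 k
    have ht1 : t ≤ 1 := by
      have : ∑ k, t * μ k ≤ ∑ k, x k := Finset.sum_le_sum fun k _ => htmul k
      rw [← Finset.mul_sum, hμ1, hx1, mul_one] at this
      exact this
    have htj0 : t * μ j0 = x j0 := by
      rw [ht, div_mul_cancel₀ _ hμj0.ne']
    -- x ∈ A j0
    refine Set.mem_iUnion.mpr ⟨j0, ?_⟩
    rw [hA]
    set B := (e '' {k | k ≠ j0}) ∪ {v} with hB
    set p : Fin n → EuclideanSpace ℝ (Fin n) := fun k => if k = j0 then v else e k with hp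
    set w : Fin n → ℝ := fun k => if k = j0 then t else x k - t * μ k with hw
    have hw0 : ∀ k ∈ Finset.univ, 0 ≤ w k := by
      intro k _
      by_cases hk : k = j0 <;> simp [hw, hk, ht0, sub_nonneg.mpr (htmul k)]
    have hwsum : ∑ k, w k = 1 := by
      rw [← Finset.add_sum_erase _ w (Finset.mem_univ j0)]
      have h1 : ∑ k ∈ Finset.univ.erase j0, w k
          = ∑ k ∈ Finset.univ.erase j0, (x k - t * μ k) := by
        apply Finset.sum_congr rfl
        intro k hk
        simp [hw, (Finset.mem_erase.mp hk).1]
      rw [h1, Finset.sum_erase_eq_sub (Finset.mem_univ j0),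
        Finset.sum_sub_distrib, ← Finset.mul_sum, hμ1, hx1]
      have hwj0 : w j0 = t := by simp [hw]
      rw [hwj0]
      linarith
    have hpB : ∀ k ∈ Finset.univ, p k ∈ convexHull ℝ B := by
      intro k _
      apply subset_convexHull
      by_cases hk : k = j0
      · simp [hp, hk, hB]
      · exact Or.inl ⟨k, hk, by simp [hp, hk]⟩
    have hsum : ∑ k, w k • p k = x := by
      have step : ∀ k, w k • p k =
          (x k - t * μ k) • e k + (if k = j0 then t • v else 0) := by
        intro k
        by_cases hk : k = j0
        · subst hk
          simp only [hw, hp, if_pos rfl]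
          rw [htj0, sub_self, zero_smul, zero_add, if_pos trivial]
        · simp [hw, hp, hk]
      rw [Finset.sum_congr rfl fun k _ => step k]
      rw [Finset.sum_add_distrib, Finset.sum_ite_eq' Finset.univ j0]
      simp only [Finset.mem_univ, if_true]
      rw [hv, Finset.smul_sum]
      have : ∑ k, (x k - t * μ k) • e k + ∑ k, t • (μ k • e k)
          = ∑ k, x k • e k := by
        rw [← Finset.sum_add_distrib]
        apply Finset.sum_congr rfl
        intro k _
        rw [smul_smul, ← add_smul]
        ring_nf
      rw [this, hrep]
    rw [← hsum]
    exact (convex_convexHull ℝ B).sum_mem hw0 hwsum hpB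
end

section
/- Let n ≥ 2, let μ : Fin n → ℝ satisfy 0 ≤ μ_j for all j and ∑_j μ_j = 1, and set v = ∑_j μ_j e_j where (e_1, …, e_n) is the standard basis of ℝ^n. For each j, let A_j be the convex hull of {e_k : k ≠ j} ∪ {v}. Then for all j ≠ k, the (n−1)-dimensional Hausdorff measure of A_j ∩ A_k is zero. -/
open MeasureTheory Module Set
open scoped ENNReal NNReal

/-- Auxiliary lemma: any set contained in a level set of a surjective linear map to `ℝ × ℝ`
has `(n-1)`-dimensional Hausdorff measure zero. -/
lemma key_null (n : ℕ) (hn : 2 ≤ n) (φ : EuclideanSpace ℝ (Fin n) →ₗ[ℝ] ℝ × ℝ)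
    (hφ : Function.Surjective φ) (s : Set (EuclideanSpace ℝ (Fin n))) (c : ℝ × ℝ)
    (hs : ∀ x ∈ s, φ x = c) :
    Measure.hausdorffMeasure ((n : ℝ) - 1) s = 0 := by
  rcases s.eq_empty_or_nonempty with rfl | ⟨x₀, hx₀⟩
  · simp
  -- s is contained in a translate of the kernel of φ
  have hsub : s ⊆ (fun y => x₀ + y) '' ((LinearMap.ker φ : Submodule ℝ _) : Set _) := by
    intro x hx
    refine ⟨x - x₀, ?_, by simp⟩
    simp [LinearMap.mem_ker, map_sub, hs x hx, hs x₀ hx₀]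
  -- the kernel has finrank n - 2
  have hker : finrank ℝ (LinearMap.ker φ) = n - 2 := by
    have h1 := LinearMap.finrank_range_add_finrank_ker φ
    rw [LinearMap.range_eq_top.2 hφ, finrank_top] at h1
    have h2 : finrank ℝ (ℝ × ℝ) = 2 := by
      simp [Module.finrank_prod]
    rw [h2, finrank_euclideanSpace_fin] at h1
    omega
  -- hence dimH of s is at most n - 2
  have htrans : Isometry (fun y : EuclideanSpace ℝ (Fin n) => x₀ + y) :=
    Isometry.of_dist_eq fun a b => by simp [dist_add_left]
  have hWdim : dimH ((LinearMap.ker φ : Submodule ℝ (EuclideanSpace ℝ (Fin n))) :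
      Set (EuclideanSpace ℝ (Fin n))) = ((n - 2 : ℕ) : ℝ≥0∞) := by
    have hiso : Isometry (⇑(LinearMap.ker φ).subtypeₗᵢ) := (LinearMap.ker φ).subtypeₗᵢ.isometry
    have hrange : (⇑(LinearMap.ker φ).subtypeₗᵢ) '' Set.univ
        = ((LinearMap.ker φ : Submodule ℝ (EuclideanSpace ℝ (Fin n))) :
          Set (EuclideanSpace ℝ (Fin n))) := by
      rw [Set.image_univ]
      ext x
      simp [Submodule.coe_subtypeₗᵢ]
    rw [← hrange, hiso.dimH_image, Real.dimH_univ_eq_finrank, hker]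
  have hdim : dimH s ≤ ((n - 2 : ℕ) : ℝ≥0∞) := by
    refine le_trans (dimH_mono hsub) ?_
    rw [htrans.dimH_image, hWdim]
  -- conclude
  have hcast : (n : ℝ) - 1 = (((n - 1 : ℕ) : ℝ≥0) : ℝ) := by
    rw [NNReal.coe_natCast, Nat.cast_sub (by omega : 1 ≤ n), Nat.cast_one]
  rw [hcast]
  apply hausdorffMeasure_of_dimH_lt
  refine lt_of_le_of_lt hdim ?_
  have : ((n - 2 : ℕ) : ℝ≥0∞) < ((n - 1 : ℕ) : ℝ≥0∞) := by
    exact_mod_cast Nat.sub_lt_sub_left (by omega) (by omega)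
  simpa using this

/-- With `A j` the convex hull of `{e k : k ≠ j} ∪ {v}`, where
`v = ∑ j, μ j • e j` for a nonnegative `μ` summing to `1` and `n ≥ 2`, the
`(n-1)`-dimensional Hausdorff measure of `A j ∩ A k` is zero for `j ≠ k`. -/
theorem stmt3 (n : ℕ) (hn : 2 ≤ n) (μ : Fin n → ℝ)
    (hμ0 : ∀ j, 0 ≤ μ j) (hμ1 : ∑ j, μ j = 1)
    (e : Fin n → EuclideanSpace ℝ (Fin n))
    (he : ∀ j, e j = EuclideanSpace.single j (1 : ℝ))
    (v : EuclideanSpace ℝ (Fin n)) (hv : v = ∑ j, μ j • e j)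
    (A : Fin n → Set (EuclideanSpace ℝ (Fin n)))
    (hA : ∀ j, A j = convexHull ℝ ((e '' {k | k ≠ j}) ∪ {v})) :
    ∀ j k : Fin n, j ≠ k →
      Measure.hausdorffMeasure ((n : ℝ) - 1) (A j ∩ A k) = 0 := by
  intro j k hjk
  -- coordinates of the basis vectors and of v
  have hel : ∀ l i : Fin n, e l i = if i = l then (1 : ℝ) else 0 := by
    intro l i
    rw [he l]
    exact EuclideanSpace.single_apply l 1 i
  have hvi : ∀ i : Fin n, v i = μ i := by
    intro i
    rw [hv]
    have : (∑ l, μ l • e l) i = ∑ l, (μ l • e l) i := by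
      rw [WithLp.ofLp_sum]
      exact Finset.sum_apply i Finset.univ _
    rw [this]
    simp only [PiLp.smul_apply, smul_eq_mul, hel]
    simp
  -- choose coefficients a, b for the separating functional
  obtain ⟨a, b, ha0, hb0, habpos, habμ⟩ :
      ∃ a b : ℝ, 0 ≤ a ∧ 0 ≤ b ∧ 0 < a + b ∧ a * μ j = b * μ k := by
    by_cases h : μ j = 0
    · exact ⟨1, 0, by norm_num, le_refl 0, by norm_num, by simp [h]⟩
    · refine ⟨μ k, μ j, hμ0 k, hμ0 j, ?_, by ring⟩
      have h' : 0 < μ j := lt_of_le_of_ne (hμ0 j) (Ne.symm h)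
      linarith [hμ0 k]
  have hab : a + b ≠ 0 := ne_of_gt habpos
  let L : EuclideanSpace ℝ (Fin n) →ₗ[ℝ] ℝ :=
    { toFun := fun x => a * x j - b * x k
      map_add' := fun x y => by simp only [PiLp.add_apply]; ring
      map_smul' := fun c x => by simp only [PiLp.smul_apply, smul_eq_mul, RingHom.id_apply]; ring }
  let S : EuclideanSpace ℝ (Fin n) →ₗ[ℝ] ℝ :=
    { toFun := fun x => ∑ i, x i
      map_add' := fun x y => by simp [PiLp.add_apply, Finset.sum_add_distrib]
      map_smul' := fun c x => by simp [PiLp.smul_apply, Finset.mul_sum] }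
  have hLdef : ∀ x : EuclideanSpace ℝ (Fin n), L x = a * x j - b * x k := fun _ => rfl
  have hSdef : ∀ x : EuclideanSpace ℝ (Fin n), S x = ∑ i, x i := fun _ => rfl
  -- A j is in the halfspace L ≤ 0, within the hyperplane S = 1
  have hAj : A j ⊆ {x | L x ≤ 0 ∧ S x = 1} := by
    rw [hA j]
    apply convexHull_min
    · rintro x (⟨l, hl, rfl⟩ | rfl)
      · have hlj : l ≠ j := hl
        constructor
        · rw [hLdef]
          simp only [hel]
          rw [if_neg (show ¬(j = l) from fun h => hlj h.symm)]
          have : (0:ℝ) ≤ b * (if k = l then (1:ℝ) else 0) := by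
            by_cases h : k = l <;> simp [h, hb0]
          linarith
        · rw [hSdef]; simp [hel]
      · constructor
        · rw [hLdef]; simp only [hvi]; linarith [habμ]
        · rw [hSdef]; simp only [hvi]; exact hμ1
    · exact (convex_halfSpace_le L.isLinear 0).inter (convex_hyperplane S.isLinear 1)
  -- A k is in the halfspace 0 ≤ L, within the hyperplane S = 1
  have hAk : A k ⊆ {x | 0 ≤ L x ∧ S x = 1} := by
    rw [hA k]
    apply convexHull_min
    · rintro x (⟨l, hl, rfl⟩ | rfl)
      · have hlk : l ≠ k := hl
        constructor
        · rw [hLdef]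
          simp only [hel]
          rw [if_neg (show ¬(k = l) from fun h => hlk h.symm)]
          have : (0:ℝ) ≤ a * (if j = l then (1:ℝ) else 0) := by
            by_cases h : j = l <;> simp [h, ha0]
          linarith
        · rw [hSdef]; simp [hel]
      · constructor
        · rw [hLdef]; simp only [hvi]; linarith [habμ]
        · rw [hSdef]; simp only [hvi]; exact hμ1
    · exact (convex_halfSpace_ge L.isLinear 0).inter (convex_hyperplane S.isLinear 1)
  -- the product map is surjective
  have hφsurj : Function.Surjective (L.prod S) := by
    rintro ⟨x, y⟩
    refine ⟨((x + b * y) / (a + b)) • EuclideanSpace.single j (1:ℝ)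
      + ((a * y - x) / (a + b)) • EuclideanSpace.single k (1:ℝ), ?_⟩
    have hcoord : ∀ i : Fin n,
        (((x + b * y) / (a + b)) • EuclideanSpace.single j (1:ℝ)
          + ((a * y - x) / (a + b)) • EuclideanSpace.single k (1:ℝ)) i
        = ((x + b * y) / (a + b)) * (if i = j then (1:ℝ) else 0)
          + ((a * y - x) / (a + b)) * (if i = k then (1:ℝ) else 0) := by
      intro i
      simp [PiLp.add_apply, PiLp.smul_apply, EuclideanSpace.single_apply]
    have hLu : L (((x + b * y) / (a + b)) • EuclideanSpace.single j (1:ℝ)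
        + ((a * y - x) / (a + b)) • EuclideanSpace.single k (1:ℝ)) = x := by
      rw [hLdef]
      rw [hcoord j, hcoord k]
      rw [if_pos rfl, if_pos rfl, if_neg hjk, if_neg (Ne.symm hjk)]
      field_simp
      ring
    have hSu : S (((x + b * y) / (a + b)) • EuclideanSpace.single j (1:ℝ)
        + ((a * y - x) / (a + b)) • EuclideanSpace.single k (1:ℝ)) = y := by
      rw [hSdef]
      simp only [hcoord]
      rw [Finset.sum_add_distrib, ← Finset.mul_sum, ← Finset.mul_sum]
      simp only [Finset.sum_ite_eq', Finset.mem_univ, if_pos, mul_one]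
      field_simp
      ring
    exact Prod.ext hLu hSu
  -- apply the key lemma
  apply key_null n hn (L.prod S) hφsurj _ ((0 : ℝ), (1 : ℝ))
  rintro x ⟨hxj, hxk⟩
  have h1 := hAj hxj
  have h2 := hAk hxk
  have : L x = 0 := le_antisymm h1.1 h2.1
  exact Prod.ext (by simpa [LinearMap.prod_apply]) (by simp [LinearMap.prod_apply, h1.2])
end

section
/- Let n ≥ 2, let μ : Fin n → ℝ satisfy 0 < μ_j for all j and ∑_j μ_j = 1, and set v = ∑_j μ_j e_j where (e_1, …, e_n) is the standard basis of ℝ^n. For each j, let A_j be the convex hull of {e_k : k ≠ j} ∪ {v}. Then for all j ≠ k, the intersection A_j ∩ A_k equals the convex hull of {e_l : l ≠ j, l ≠ k} ∪ {v}. -/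
theorem sum_apply_pilp (n : ℕ) (l : Fin n) (s : Finset (Fin n))
    (f : Fin n → EuclideanSpace ℝ (Fin n)) :
    (∑ x ∈ s, f x) l = ∑ x ∈ s, f x l := by
  induction s using Finset.cons_induction with
  | empty => rfl
  | cons a s ha ih => rw [Finset.sum_cons, Finset.sum_cons, ← ih]; rfl

/-- With `A j` the convex hull of `{e k : k ≠ j} ∪ {v}`, where
`v = ∑ j, μ j • e j` for a strictly positive `μ` summing to `1` and `n ≥ 2`,
for `j ≠ k` the intersection `A j ∩ A k` is the convex hull of
`{e l : l ≠ j, l ≠ k} ∪ {v}`. -/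
theorem stmt4 (n : ℕ) (hn : 2 ≤ n) (μ : Fin n → ℝ)
    (hμ0 : ∀ j, 0 < μ j) (hμ1 : ∑ j, μ j = 1)
    (e : Fin n → EuclideanSpace ℝ (Fin n))
    (he : ∀ j, e j = EuclideanSpace.single j (1 : ℝ))
    (v : EuclideanSpace ℝ (Fin n)) (hv : v = ∑ j, μ j • e j)
    (A : Fin n → Set (EuclideanSpace ℝ (Fin n)))
    (hA : ∀ j, A j = convexHull ℝ ((e '' {k | k ≠ j}) ∪ {v})) :
    ∀ j k : Fin n, j ≠ k →
      A j ∩ A k = convexHull ℝ ((e '' {l | l ≠ j ∧ l ≠ k}) ∪ {v}) := by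
  intro j k hjk
  have hel : ∀ m l : Fin n, e m l = if l = m then 1 else 0 := by
    intro m l; simp [he, EuclideanSpace.single_apply]
  have hvl : ∀ l, v l = μ l := by
    intro l; rw [hv, sum_apply_pilp]
    simp [hel, PiLp.smul_apply]
  -- coordinate characterization of A i
  have char : ∀ i : Fin n, A i ⊆
      {x : EuclideanSpace ℝ (Fin n) |
        (∀ l, 0 ≤ x l) ∧ (∑ l, x l = 1) ∧ ∀ l, x i * μ l ≤ x l * μ i} := by
    intro i
    rw [hA i]
    apply convexHull_min
    · rintro y (⟨m, hm, rfl⟩ | rfl)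
      · refine ⟨fun l => ?_, ?_, fun l => ?_⟩
        · rw [hel]; split_ifs <;> norm_num
        · simp [hel]
        · have h1 : e m i = 0 := by
            rw [hel, if_neg (fun h : i = m => hm h.symm)]
          rw [h1, zero_mul]
          have : 0 ≤ e m l := by rw [hel]; split_ifs <;> norm_num
          exact mul_nonneg this (hμ0 i).le
      · exact ⟨fun l => by rw [hvl]; exact (hμ0 l).le,
          by simp [hvl, hμ1],
          fun l => by rw [hvl, hvl, mul_comm]⟩
    · rintro x hx y hy a b ha hb hab
      have key : ∀ l, (a • x + b • y) l = a * x l + b * y l := fun l => rfl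
      refine ⟨fun l => ?_, ?_, fun l => ?_⟩
      · rw [key]
        exact add_nonneg (mul_nonneg ha (hx.1 l)) (mul_nonneg hb (hy.1 l))
      · simp only [key, Finset.sum_add_distrib, ← Finset.mul_sum,
          hx.2.1, hy.2.1]
        linarith
      · rw [key, key]
        nlinarith [mul_le_mul_of_nonneg_left (hx.2.2 l) ha,
          mul_le_mul_of_nonneg_left (hy.2.2 l) hb]
  apply Set.Subset.antisymm
  · rintro x ⟨hxj, hxk⟩
    obtain ⟨h1, h2, h3⟩ := char j hxj
    obtain ⟨-, -, h3'⟩ := char k hxk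
    have hμj := hμ0 j
    have hμk := hμ0 k
    obtain ⟨t, ht⟩ : ∃ t : ℝ, t = x j / μ j := ⟨_, rfl⟩
    have htj : x j = t * μ j := by rw [ht]; field_simp
    have hjkx : x j * μ k = x k * μ j := le_antisymm (h3 k) (h3' j)
    have htk : x k = t * μ k := by
      rw [ht, div_mul_eq_mul_div, eq_div_iff hμj.ne', mul_comm (x j)]
      linarith
    obtain ⟨c, hc⟩ : ∃ c : Fin n → ℝ, ∀ l, c l = x l - t * μ l :=
      ⟨_, fun _ => rfl⟩
    have hc0 : ∀ l, 0 ≤ c l := by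
      intro l
      rw [hc l, sub_nonneg, ht, div_mul_eq_mul_div, div_le_iff₀ hμj]
      linarith [h3 l]
    have hcj : c j = 0 := by rw [hc j, htj, sub_self]
    have hck : c k = 0 := by rw [hc k, htk, sub_self]
    have ht0 : 0 ≤ t := ht ▸ div_nonneg (h1 j) hμj.le
    obtain ⟨w, hw⟩ : ∃ w : Fin n → ℝ,
        ∀ l, w l = c l + if l = j then t else 0 := ⟨_, fun _ => rfl⟩
    obtain ⟨z, hz⟩ : ∃ z : Fin n → EuclideanSpace ℝ (Fin n),
        ∀ l, z l = if l = j then v else e l := ⟨_, fun _ => rfl⟩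
    have hcsum : ∑ l, c l = 1 - t := by
      simp only [hc, Finset.sum_sub_distrib, h2, ← Finset.mul_sum, hμ1,
        mul_one]
    have hwk : w k = 0 := by
      rw [hw k, hck, if_neg (Ne.symm hjk), add_zero]
    have hsum : ∑ l ∈ Finset.univ.erase k, w l = 1 := by
      rw [Finset.sum_erase _ hwk]
      simp only [hw]
      rw [Finset.sum_add_distrib, hcsum,
        Finset.sum_ite_eq' Finset.univ j (fun _ => t)]
      simp
    have hxe : x = ∑ l ∈ Finset.univ.erase k, w l • z l := by
      refine PiLp.ext fun m => ?_
      rw [sum_apply_pilp]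
      have step : ∀ l, (w l • z l) m =
          (if l = j then t * μ m else 0) + (if m = l then c l else 0) := by
        intro l
        have h0 : (w l • z l) m = w l * z l m := rfl
        rw [h0, hw l, hz l]
        by_cases hlj : l = j
        · subst hlj
          rw [if_pos rfl, if_pos rfl, if_pos rfl, hcj, zero_add, hvl,
            ite_self, add_zero]
        · rw [if_neg hlj, if_neg hlj, if_neg hlj, add_zero, zero_add, hel]
          by_cases hml : m = l
          · rw [if_pos hml, if_pos hml, mul_one]
          · rw [if_neg hml, if_neg hml, mul_zero]
      simp only [step]
      rw [Finset.sum_add_distrib,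
        Finset.sum_ite_eq' (Finset.univ.erase k) j (fun _ => t * μ m),
        Finset.sum_ite_eq (Finset.univ.erase k) m c,
        if_pos (Finset.mem_erase.mpr ⟨hjk, Finset.mem_univ j⟩)]
      by_cases hm : m ∈ Finset.univ.erase k
      · rw [if_pos hm, hc m]; ring
      · have hmk : m = k := by simpa using hm
        subst hmk
        rw [if_neg hm, add_zero, htk]
    rw [hxe]
    refine Convex.sum_mem (convex_convexHull ℝ _) (fun i _ => ?_) hsum
      (fun i hi => ?_)
    · rw [hw i]
      exact add_nonneg (hc0 i) (by split_ifs <;> simp [ht0])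
    · rw [hz i]
      by_cases hij : i = j
      · rw [if_pos hij]
        exact subset_convexHull ℝ _ (Or.inr rfl)
      · rw [if_neg hij]
        exact subset_convexHull ℝ _
          (Or.inl ⟨i, ⟨hij, (Finset.mem_erase.mp hi).1⟩, rfl⟩)
  · apply Set.subset_inter
    · rw [hA j]
      apply convexHull_mono
      rintro y (⟨m, hm, rfl⟩ | rfl)
      · exact Or.inl ⟨m, hm.1, rfl⟩
      · exact Or.inr rfl
    · rw [hA k]
      apply convexHull_mono
      rintro y (⟨m, hm, rfl⟩ | rfl)
      · exact Or.inl ⟨m, hm.2, rfl⟩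
      · exact Or.inr rfl
end

section
/- Let n ≥ 2, let μ : Fin n → ℝ satisfy 0 < μ_j for all j and ∑_j μ_j = 1, and set v = ∑_j μ_j e_j where (e_1, …, e_n) is the standard basis of ℝ^n. For each j, let A_j be the convex hull of {e_k : k ≠ j} ∪ {v}. Then for all j ≠ k, the intrinsic (relative) interiors of A_j and A_k are disjoint. -/
lemma ext_lemma {V : Type*} [NormedAddCommGroup V] [NormedSpace ℝ V]
    {s : Set V} {x y : V} (hx : x ∈ intrinsicInterior ℝ s) (hy : y ∈ s) :
    ∃ t : ℝ, 0 < t ∧ x + t • (x - y) ∈ s := by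
  rw [intrinsicInterior] at hx
  obtain ⟨x', hx', rfl⟩ := hx
  have hys : y ∈ affineSpan ℝ s := subset_affineSpan ℝ s hy
  have hmem : ∀ t : ℝ, (x' : V) + t • ((x' : V) - y) ∈ affineSpan ℝ s := by
    intro t
    have := AffineSubspace.smul_vsub_vadd_mem (affineSpan ℝ s) t x'.2 hys x'.2
    simpa [vsub_eq_sub, vadd_eq_add, add_comm] using this
  set g : ℝ → affineSpan ℝ s := fun t => ⟨(x' : V) + t • ((x' : V) - y), hmem t⟩
  have hg : Continuous g := by
    apply Continuous.subtype_mk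
    continuity
  have hg0 : g 0 = x' := by simp [g]
  have hopen : IsOpen (g ⁻¹' interior ((↑) ⁻¹' s)) := isOpen_interior.preimage hg
  have h0 : (0 : ℝ) ∈ g ⁻¹' interior ((↑) ⁻¹' s) := by simp [hg0, hx']
  rw [Metric.isOpen_iff] at hopen
  obtain ⟨ε, hε, hball⟩ := hopen 0 h0
  refine ⟨ε / 2, by positivity, ?_⟩
  have : (ε / 2 : ℝ) ∈ Metric.ball (0:ℝ) ε := by
    simp [Real.ball_eq_Ioo]; constructor <;> linarith
  have h2 := hball this
  have h3 : g (ε/2) ∈ (↑) ⁻¹' s := interior_subset h2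
  exact h3

/-- With `A j` the convex hull of `{e k : k ≠ j} ∪ {v}`, where
`v = ∑ j, μ j • e j` for a strictly positive `μ` summing to `1` and `n ≥ 2`,
the intrinsic interiors of `A j` and `A k` are disjoint for `j ≠ k`. -/
theorem stmt5 (n : ℕ) (hn : 2 ≤ n) (μ : Fin n → ℝ)
    (hμ0 : ∀ j, 0 < μ j) (hμ1 : ∑ j, μ j = 1)
    (e : Fin n → EuclideanSpace ℝ (Fin n))
    (he : ∀ j, e j = EuclideanSpace.single j (1 : ℝ))
    (v : EuclideanSpace ℝ (Fin n)) (hv : v = ∑ j, μ j • e j)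
    (A : Fin n → Set (EuclideanSpace ℝ (Fin n)))
    (hA : ∀ j, A j = convexHull ℝ ((e '' {k | k ≠ j}) ∪ {v})) :
    ∀ j k : Fin n, j ≠ k →
      Disjoint (intrinsicInterior ℝ (A j)) (intrinsicInterior ℝ (A k)) := by
  intro j k hjk
  -- coordinates of e and v
  have hel : ∀ l i : Fin n, (e l) i = if i = l then (1:ℝ) else 0 := by
    intro l i; rw [he]; exact EuclideanSpace.single_apply l 1 i
  have hvc : ∀ i : Fin n, v i = μ i := by
    intro i
    have : v i = ∑ l, (μ l • e l) i := by rw [hv, WithLp.ofLp_sum]; exact Finset.sum_apply i _ _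
    rw [this]
    have : ∀ l, (μ l • e l) i = μ l * (if i = l then (1:ℝ) else 0) := by
      intro l; simp [hel l i]
    simp_rw [this]
    simp
  -- the separating functional
  set f : EuclideanSpace ℝ (Fin n) → ℝ := fun x => μ k * x j - μ j * x k with hf
  have hlin : IsLinearMap ℝ f := by
    constructor
    · intro a b; simp only [hf]; simp [PiLp.add_apply]; ring
    · intro c a; simp only [hf]; simp [PiLp.smul_apply, smul_eq_mul]; ring
  have hconv_le : Convex ℝ {x : EuclideanSpace ℝ (Fin n) | f x ≤ 0} :=
    convex_halfSpace_le hlin 0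
  have hconv_ge : Convex ℝ {x : EuclideanSpace ℝ (Fin n) | 0 ≤ f x} :=
    convex_halfSpace_ge hlin 0
  have hfv : f v = 0 := by simp [hf, hvc]; ring
  -- A j ⊆ {f ≤ 0}
  have hAj : A j ⊆ {x | f x ≤ 0} := by
    rw [hA]
    apply convexHull_min _ hconv_le
    rintro x (⟨l, hl, rfl⟩ | rfl)
    · simp only [Set.mem_setOf_eq, hf, hel, mul_ite, mul_one, mul_zero]
      split_ifs <;> simp_all <;> linarith [hμ0 j, hμ0 k]
    · exact le_of_eq hfv
  -- A k ⊆ {0 ≤ f}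
  have hAk : A k ⊆ {x | 0 ≤ f x} := by
    rw [hA]
    apply convexHull_min _ hconv_ge
    rintro x (⟨l, hl, rfl⟩ | rfl)
    · simp only [Set.mem_setOf_eq, hf, hel, mul_ite, mul_one, mul_zero]
      split_ifs <;> simp_all <;> linarith [hμ0 j, hμ0 k]
    · exact ge_of_eq hfv
  -- now the disjointness
  rw [Set.disjoint_left]
  intro x hxj hxk
  have hxAj : x ∈ A j := intrinsicInterior_subset hxj
  have hxAk : x ∈ A k := intrinsicInterior_subset hxk
  have hfx : f x = 0 := le_antisymm (hAj hxAj) (hAk hxAk)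
  have hek : e k ∈ A j := by
    rw [hA]
    exact subset_convexHull ℝ _ (Or.inl ⟨k, hjk.symm, rfl⟩)
  obtain ⟨t, ht, hz⟩ := ext_lemma hxj hek
  have hfz : f (x + t • (x - e k)) ≤ 0 := hAj hz
  have hfek : f (e k) = -μ j := by
    simp only [hf, hel]
    simp [hjk]
  have : f (x + t • (x - e k)) = f x + t * (f x - f (e k)) := by
    rw [hlin.map_add, hlin.map_smul, hlin.map_sub, smul_eq_mul]
  rw [this, hfx, hfek] at hfz
  nlinarith [hμ0 j]
end

section
/- Let n ≥ 2, let μ : Fin n → ℝ satisfy 0 ≤ μ_j for all j and ∑_j μ_j = 1, and set v = ∑_j μ_j e_j where (e_1, …, e_n) is the standard basis of ℝ^n. Let S be the convex hull of {e_1, …, e_n} and, for each j, let A_j be the convex hull of {e_k : k ≠ j} ∪ {v}. Let P be the uniform probability measure on S, i.e. the (n−1)-dimensional Hausdorff measure restricted to S and normalized by H^{n−1}(S) (which is finite and nonzero). Then for every j, P(A_j) = μ_j. -/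
open MeasureTheory Set
open scoped ENNReal NNReal Matrix
open Module


lemma aux_hausdorff_le (m : ℕ) (s : Set (EuclideanSpace ℝ (Fin m))) :
    volume ((WithLp.equiv 2 (Fin m → ℝ)) '' s)
      ≤ Measure.hausdorffMeasure (m : ℝ) s := by
  have hpiv : (Measure.hausdorffMeasure (m : ℝ) : Measure (Fin m → ℝ)) = volume := by
    simpa using MeasureTheory.hausdorffMeasure_pi_real (ι := Fin m)
  have h := (PiLp.lipschitzWith_ofLp 2 (fun _ : Fin m => ℝ) : LipschitzWith 1 (WithLp.equiv 2 (Fin m → ℝ))).hausdorffMeasure_image_le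
    (d := (m : ℝ)) (by positivity) s
  simpa [hpiv] using h

lemma aux_le_hausdorff (m : ℕ) : ∃ C : ℝ≥0∞, C ≠ ⊤ ∧
    ∀ s : Set (EuclideanSpace ℝ (Fin m)), Measure.hausdorffMeasure (m : ℝ) s
      ≤ C * volume ((WithLp.equiv 2 (Fin m → ℝ)) '' s) := by
  have hm0 : (0:ℝ) ≤ (m:ℝ) := by positivity
  refine ⟨((((Fintype.card (Fin m) : ℝ≥0) ^ (1 / (2:ℝ≥0∞)).toReal : ℝ≥0) : ℝ≥0∞)) ^ (m:ℝ),
    (ENNReal.rpow_lt_top_of_nonneg hm0 ENNReal.coe_ne_top).ne, fun s => ?_⟩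
  have hpiv : (Measure.hausdorffMeasure (m : ℝ) : Measure (Fin m → ℝ)) = volume := by
    simpa using MeasureTheory.hausdorffMeasure_pi_real (ι := Fin m)
  have hlip : LipschitzWith ((Fintype.card (Fin m) : ℝ≥0) ^ (1 / (2:ℝ≥0∞)).toReal)
      ((WithLp.equiv 2 (Fin m → ℝ)).symm) :=
    (PiLp.antilipschitzWith_ofLp 2 (fun _ : Fin m => ℝ) : AntilipschitzWith _ (WithLp.equiv 2 (Fin m → ℝ))).to_rightInverse
      (WithLp.equiv 2 (Fin m → ℝ)).right_inv
  have h := hlip.hausdorffMeasure_image_le (d := (m : ℝ)) (by positivity)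
    ((WithLp.equiv 2 (Fin m → ℝ)) '' s)
  rw [Equiv.symm_image_image, hpiv] at h
  exact h

lemma aux_isAddHaar (m : ℕ) :
    Measure.IsAddHaarMeasure
      (Measure.hausdorffMeasure (m : ℝ) : Measure (EuclideanSpace ℝ (Fin m))) := by
  have hcont : Continuous (WithLp.equiv 2 (Fin m → ℝ)) :=
    (PiLp.lipschitzWith_ofLp 2 (fun _ : Fin m => ℝ) : LipschitzWith 1 (WithLp.equiv 2 (Fin m → ℝ))).continuous
  have hcont' : Continuous (WithLp.equiv 2 (Fin m → ℝ)).symm :=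
    ((PiLp.antilipschitzWith_ofLp 2 (fun _ : Fin m => ℝ) : AntilipschitzWith _ (WithLp.equiv 2 (Fin m → ℝ))).to_rightInverse
      (WithLp.equiv 2 (Fin m → ℝ)).right_inv).continuous
  haveI h1 : IsFiniteMeasureOnCompacts
      (Measure.hausdorffMeasure (m : ℝ) : Measure (EuclideanSpace ℝ (Fin m))) := by
    constructor
    intro K hK
    obtain ⟨C, hC, hCle⟩ := aux_le_hausdorff m
    refine lt_of_le_of_lt (hCle K) ?_
    exact ENNReal.mul_lt_top hC.lt_top (hK.image hcont).measure_lt_top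
  haveI h3 : Measure.IsOpenPosMeasure
      (Measure.hausdorffMeasure (m : ℝ) : Measure (EuclideanSpace ℝ (Fin m))) := by
    constructor
    intro U hU hne
    have hUopen : IsOpen ((WithLp.equiv 2 (Fin m → ℝ)) '' U) := by
      rw [Equiv.image_eq_preimage_symm]
      exact hU.preimage hcont'
    have hpos : 0 < volume ((WithLp.equiv 2 (Fin m → ℝ)) '' U) :=
      hUopen.measure_pos volume (hne.image _)
    intro h0
    have := le_trans (aux_hausdorff_le m U) (le_of_eq h0)
    simp only [nonpos_iff_eq_zero] at this
    exact hpos.ne' this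
  exact ⟨⟩

set_option maxHeartbeats 2000000 in
/-- With `S` the standard simplex of `ℝ^n` and `A j` the convex hull of
`{e k : k ≠ j} ∪ {v}`, where `v = ∑ j, μ j • e j` for a nonnegative `μ` summing to `1`
and `n ≥ 2`: the `(n-1)`-dimensional Hausdorff measure of `S` is nonzero and finite, and
the uniform probability measure `P` on `S` (the restriction of `H^{n-1}` to `S`,
normalized by `H^{n-1}(S)`) satisfies `P (A j) = μ j` for every `j`. -/
theorem stmt7 (n : ℕ) (hn : 2 ≤ n) (μ : Fin n → ℝ)
    (hμ0 : ∀ j, 0 ≤ μ j) (hμ1 : ∑ j, μ j = 1)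
    (e : Fin n → EuclideanSpace ℝ (Fin n))
    (he : ∀ j, e j = EuclideanSpace.single j (1 : ℝ))
    (v : EuclideanSpace ℝ (Fin n)) (hv : v = ∑ j, μ j • e j)
    (S : Set (EuclideanSpace ℝ (Fin n))) (hS : S = convexHull ℝ (Set.range e))
    (A : Fin n → Set (EuclideanSpace ℝ (Fin n)))
    (hA : ∀ j, A j = convexHull ℝ ((e '' {k | k ≠ j}) ∪ {v}))
    (P : Measure (EuclideanSpace ℝ (Fin n)))
    (hP : P = (Measure.hausdorffMeasure ((n : ℝ) - 1) S)⁻¹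
            • (Measure.hausdorffMeasure ((n : ℝ) - 1)).restrict S) :
    Measure.hausdorffMeasure ((n : ℝ) - 1) S ≠ 0 ∧
    Measure.hausdorffMeasure ((n : ℝ) - 1) S ≠ ⊤ ∧
    ∀ j : Fin n, P (A j) = ENNReal.ofReal (μ j) := by
  classical
  subst hv hS hP
  have hn2 : (2:ℝ) ≤ (n:ℝ) := by exact_mod_cast hn
  have hd0 : (0:ℝ) ≤ (n:ℝ) - 1 := by linarith
  have hj0 : (0:ℕ) < n := by omega
  -- coordinate functionals
  let coordL : Fin n → (EuclideanSpace ℝ (Fin n) →ₗ[ℝ] ℝ) := fun i =>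
    { toFun := fun x => x i
      map_add' := fun x y => rfl
      map_smul' := fun c x => rfl }
  let l : EuclideanSpace ℝ (Fin n) →ₗ[ℝ] ℝ := ∑ i, coordL i
  have hlapp : ∀ x : EuclideanSpace ℝ (Fin n), l x = ∑ i, x i := fun x => by
    show (∑ i, coordL i) x = _
    rw [LinearMap.sum_apply]; rfl
  have hle : ∀ k, l (e k) = 1 := fun k => by
    rw [hlapp, he]
    simp [EuclideanSpace.single_apply]
  have hlv : l (∑ i, μ i • e i) = 1 := by
    rw [map_sum]
    simp only [_root_.map_smul, hle, smul_eq_mul, mul_one]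
    exact hμ1
  set W := LinearMap.ker l with hWdef
  have hWmem : ∀ x, x ∈ W ↔ l x = 0 := fun x => LinearMap.mem_ker
  have hrange : LinearMap.range l = ⊤ := by
    rw [LinearMap.range_eq_top]
    intro x
    exact ⟨x • e ⟨0, hj0⟩, by rw [_root_.map_smul, hle]; simp⟩
  have hfr : finrank ℝ W = n - 1 := by
    have h1 := LinearMap.finrank_range_add_finrank_ker l
    rw [hrange, finrank_top, finrank_euclideanSpace] at h1
    rw [← hWdef] at h1
    simp only [finrank_self, Fintype.card_fin] at h1
    omega
  have hdm : ((finrank ℝ W : ℕ) : ℝ) = (n:ℝ) - 1 := by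
    rw [hfr, Nat.cast_sub (by omega : 1 ≤ n), Nat.cast_one]
  set m := finrank ℝ W with hmdef
  set ρ := (stdOrthonormalBasis ℝ W).repr with hρ
  set p := e ⟨0, hj0⟩ with hp
  have hmemW : ∀ k, e k - p ∈ W := fun k => by
    rw [hWmem, map_sub, hle, hle, sub_self]
  have hmemWv : (∑ i, μ i • e i) - p ∈ W := by
    rw [hWmem, map_sub, hlv, hle, sub_self]
  let F : EuclideanSpace ℝ (Fin m) →ᵃ[ℝ] EuclideanSpace ℝ (Fin n) :=
    { toFun := fun x => p + ((ρ.symm x : W) : EuclideanSpace ℝ (Fin n))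
      linear := W.subtype ∘ₗ (ρ.symm.toLinearEquiv : EuclideanSpace ℝ (Fin m) ≃ₗ[ℝ] W).toLinearMap
      map_vadd' := fun x u => by
        simp only [vadd_eq_add, map_add, Submodule.coe_add, LinearMap.comp_apply,
          LinearEquiv.coe_coe, LinearIsometryEquiv.coe_toLinearEquiv, Submodule.coe_subtype]
        abel }
  have hFapp : ∀ x, F x = p + ((ρ.symm x : W) : EuclideanSpace ℝ (Fin n)) := fun _ => rfl
  have hFiso : Isometry (F : EuclideanSpace ℝ (Fin m) → EuclideanSpace ℝ (Fin n)) := by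
    apply Isometry.of_dist_eq
    intro x y
    rw [hFapp, hFapp, dist_add_left]
    rw [← Subtype.dist_eq, ρ.symm.dist_map]
  have hFinj : Function.Injective (F : EuclideanSpace ℝ (Fin m) → EuclideanSpace ℝ (Fin n)) :=
    hFiso.injective
  let w : Fin n → EuclideanSpace ℝ (Fin m) := fun k => ρ ⟨e k - p, hmemW k⟩
  let wv : EuclideanSpace ℝ (Fin m) := ρ ⟨(∑ i, μ i • e i) - p, hmemWv⟩
  have hFw : ∀ k, F (w k) = e k := fun k => by
    rw [hFapp]
    show p + ((ρ.symm (ρ ⟨e k - p, hmemW k⟩) : W) : EuclideanSpace ℝ (Fin n)) = e k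
    rw [LinearIsometryEquiv.symm_apply_apply]
    simp
  have hFv : F wv = ∑ i, μ i • e i := by
    rw [hFapp]
    show p + ((ρ.symm (ρ ⟨_, hmemWv⟩) : W) : EuclideanSpace ℝ (Fin n)) = _
    rw [LinearIsometryEquiv.symm_apply_apply]
    simp
  have hcomp : (F ∘ w) = e := funext fun k => hFw k
  have hSim : convexHull ℝ (Set.range e) = F '' (convexHull ℝ (Set.range w)) := by
    rw [AffineMap.image_convexHull, ← Set.range_comp, hcomp]
  -- affine independence
  have hae : AffineIndependent ℝ e := by
    rw [affineIndependent_iff]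
    intro s wgt hsum hzero i hi
    have h1 := congrArg (coordL i) hzero
    rw [map_sum, map_zero] at h1
    simp only [_root_.map_smul, smul_eq_mul] at h1
    have h2 : ∀ k, coordL i (e k) = if i = k then 1 else 0 := fun k => by
      show (e k) i = _
      rw [he]
      simp [EuclideanSpace.single_apply]
    have h3 : ∑ k ∈ s, wgt k * (coordL i) (e k) = ∑ k ∈ s, (if i = k then wgt k else 0) :=
      Finset.sum_congr rfl fun k _ => by
        rw [h2 k]; by_cases h : i = k <;> simp [h]
    rw [h3, Finset.sum_ite_eq s i wgt, if_pos hi] at h1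
    exact h1
  have hae' : AffineIndependent ℝ (F ∘ w) := hcomp ▸ hae
  have haw : AffineIndependent ℝ w := AffineIndependent.of_comp F hae'
  have hcardn : Fintype.card (Fin n) = finrank ℝ (EuclideanSpace ℝ (Fin m)) + 1 := by
    rw [finrank_euclideanSpace, Fintype.card_fin, Fintype.card_fin, hfr]
    omega
  have hspan : affineSpan ℝ (Set.range w) = ⊤ :=
    haw.affineSpan_eq_top_iff_card_eq_finrank_add_one.mpr hcardn
  let b : AffineBasis (Fin n) ℝ (EuclideanSpace ℝ (Fin m)) := ⟨w, haw, hspan⟩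
  have hbcoe : ∀ k, b k = w k := fun k => rfl
  -- the Hausdorff measure downstairs is Haar
  haveI hHaar : (Measure.hausdorffMeasure ((n:ℝ)-1) :
      Measure (EuclideanSpace ℝ (Fin m))).IsAddHaarMeasure := by
    rw [← hdm]; exact aux_isAddHaar m
  set s0 := convexHull ℝ (Set.range w) with hs0
  set ν := (Measure.hausdorffMeasure ((n:ℝ)-1) : Measure (EuclideanSpace ℝ (Fin m))) with hν
  have hs0conv : Convex ℝ s0 := convex_convexHull ℝ _
  have hs0span : affineSpan ℝ s0 = ⊤ := by rw [hs0, affineSpan_convexHull]; exact hspan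
  have hs0int : (interior s0).Nonempty :=
    hs0conv.interior_nonempty_iff_affineSpan_eq_top.mpr hs0span
  have hs0pos : 0 < ν s0 :=
    lt_of_lt_of_le (isOpen_interior.measure_pos ν hs0int) (measure_mono interior_subset)
  have hs0fin : ν s0 < ⊤ := ((Set.finite_range w).isCompact_convexHull ℝ).measure_lt_top
  have hSmeas : Measure.hausdorffMeasure ((n:ℝ)-1) (convexHull ℝ (Set.range e)) = ν s0 := by
    rw [hSim, hν]
    exact hFiso.hausdorffMeasure_image (Or.inl hd0) s0
  refine ⟨by rw [hSmeas]; exact hs0pos.ne', by rw [hSmeas]; exact hs0fin.ne, ?_⟩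
  intro j
  -- the affine contraction G
  set c := wv - w j with hcdef
  let G : EuclideanSpace ℝ (Fin m) →ᵃ[ℝ] EuclideanSpace ℝ (Fin m) :=
    { toFun := fun x => x + (b.coord j x) • c
      linear := LinearMap.id + ((b.coord j).linear).smulRight c
      map_vadd' := fun x u => by
        have hcv : (b.coord j) (u +ᵥ x) = (b.coord j).linear u + (b.coord j) x := by
          rw [AffineMap.map_vadd]; rfl
        simp only [vadd_eq_add] at hcv ⊢
        rw [hcv]
        simp only [LinearMap.add_apply, LinearMap.id_apply, LinearMap.smulRight_apply, add_smul]
        abel }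
  have hGapp : ∀ x, G x = x + (b.coord j x) • c := fun _ => rfl
  have hGlin : G.linear = LinearMap.id + ((b.coord j).linear).smulRight c := rfl
  have hcoordw : ∀ i k, b.coord i (w k) = if i = k then 1 else 0 := fun i k => by
    rw [← hbcoe k]
    exact b.coord_apply i k
  have hGw : ∀ k, G (w k) = Function.update w j wv k := by
    intro k
    rw [hGapp, hcoordw]
    rcases eq_or_ne k j with rfl | hkj
    · rw [Function.update_self, if_pos rfl, one_smul, hcdef]
      abel
    · rw [Function.update_of_ne hkj, if_neg (Ne.symm hkj), zero_smul, add_zero]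
  have hGcomp : G ∘ w = Function.update w j wv := funext hGw
  -- A j as an image
  have hupdate : Set.range (Function.update e j (∑ i, μ i • e i))
      = (e '' {k | k ≠ j}) ∪ {∑ i, μ i • e i} := by
    ext x
    simp only [Set.mem_range, Set.mem_union, Set.mem_image, Set.mem_setOf_eq,
      Set.mem_singleton_iff]
    constructor
    · rintro ⟨k, rfl⟩
      rcases eq_or_ne k j with rfl | h
      · right; rw [Function.update_self]
      · left; exact ⟨k, h, by rw [Function.update_of_ne h]⟩
    · rintro (⟨k, hk, rfl⟩ | rfl)
      · exact ⟨k, by rw [Function.update_of_ne hk]⟩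
      · exact ⟨j, by rw [Function.update_self]⟩
  have hFcomp2 : F ∘ (Function.update w j wv) = Function.update e j (∑ i, μ i • e i) := by
    funext k
    rcases eq_or_ne k j with rfl | hkj
    · simp only [Function.comp_apply, Function.update_self]
      exact hFv
    · simp only [Function.comp_apply, Function.update_of_ne hkj]
      exact hFw k
  have hAim : A j = F '' (convexHull ℝ (Set.range (Function.update w j wv))) := by
    rw [hA j, AffineMap.image_convexHull, ← Set.range_comp, hFcomp2, hupdate]
  have hs1 : convexHull ℝ (Set.range (Function.update w j wv)) = G '' s0 := by
    rw [hs0, AffineMap.image_convexHull, ← Set.range_comp, hGcomp]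
  -- decompose G as translation ∘ linear
  have hGdec : ⇑G = (fun y => G 0 + y) ∘ ⇑G.linear := by
    funext x
    have hx : b.coord j x = (b.coord j).linear x + b.coord j 0 := by
      have h := (b.coord j).map_vadd 0 x
      simpa [vadd_eq_add] using h
    show G x = G 0 + G.linear x
    rw [hGapp, hGapp, hGlin]
    simp only [LinearMap.add_apply, LinearMap.id_apply, LinearMap.smulRight_apply]
    rw [hx, add_smul]
    abel
  have hνG : ν (G '' s0) = ENNReal.ofReal |LinearMap.det G.linear| * ν s0 := by
    rw [hGdec, Set.image_comp]
    have htrans : Isometry (fun y : EuclideanSpace ℝ (Fin m) => G 0 + y) :=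
      Isometry.of_dist_eq fun a b => dist_add_left _ a b
    rw [hν, htrans.hausdorffMeasure_image (Or.inl hd0), ← hν]
    exact Measure.addHaar_image_linearMap ν G.linear s0
  -- wv is the affine combination of the w's with weights μ
  have hwv : wv = Finset.univ.affineCombination ℝ w μ := by
    apply hFinj
    rw [hFv, Finset.univ.map_affineCombination w μ hμ1 F, hcomp]
    exact (Finset.univ.affineCombination_eq_linear_combination e μ hμ1).symm
  have hcsum : c = ∑ i : {k : Fin n // k ≠ j}, μ i • (w i - w j) := by
    rw [hcdef, hwv,
      Finset.univ.affineCombination_eq_weightedVSubOfPoint_vadd_of_sum_eq_one μ w hμ1 (w j),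
      vadd_eq_add, add_sub_cancel_right, Finset.weightedVSubOfPoint_apply]
    simp only [vsub_eq_sub]
    have hz : (fun i => μ i • (w i - w j)) j = 0 := by simp
    rw [← Finset.sum_erase (f := fun i => μ i • (w i - w j)) Finset.univ hz]
    exact Finset.sum_subtype _ (by simp) _
  have hcard' : Fintype.card {k : Fin n // k ≠ j} = m := by
    simp only [Ne]
    rw [Fintype.card_subtype_compl, Fintype.card_subtype_eq, Fintype.card_fin, hfr]
  haveI : Nontrivial (Fin n) := by
    refine ⟨⟨0, by omega⟩, ⟨1, by omega⟩, ?_⟩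
    intro h
    have := congrArg Fin.val h
    simp at this
  haveI : Nonempty {k : Fin n // k ≠ j} := by
    obtain ⟨k, hk⟩ := exists_ne j
    exact ⟨⟨k, hk⟩⟩
  have hli : LinearIndependent ℝ (fun i : {k : Fin n // k ≠ j} => w i - w j) := by
    have h := (affineIndependent_iff_linearIndependent_vsub ℝ w j).mp haw
    simpa [vsub_eq_sub] using h
  let U : Basis {k : Fin n // k ≠ j} ℝ (EuclideanSpace ℝ (Fin m)) :=
    basisOfLinearIndependentOfCardEqFinrank hli
      (by rw [hcard', finrank_euclideanSpace, Fintype.card_fin])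
  have hU : ∀ i : {k : Fin n // k ≠ j}, U i = w i - w j := fun i =>
    congrFun (coe_basisOfLinearIndependentOfCardEqFinrank hli _) i
  have hreprc : ∀ i, U.repr c i = μ i := by
    intro i
    have hc2 : c = ∑ i : {k : Fin n // k ≠ j}, (fun i : {k : Fin n // k ≠ j} => μ i) i • U i := by
      rw [hcsum]
      exact Finset.sum_congr rfl fun i _ => by rw [hU]
    rw [hc2, Basis.repr_sum_self]
  have hlinU : ∀ k : {k : Fin n // k ≠ j}, G.linear (U k) = U k - c := by
    intro k
    rw [hGlin]
    simp only [LinearMap.add_apply, LinearMap.id_apply, LinearMap.smulRight_apply]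
    have h1 : (b.coord j).linear (U k) = -1 := by
      rw [hU]
      have h2 : (b.coord j).linear (w k -ᵥ w j) = b.coord j (w ↑k) -ᵥ b.coord j (w j) :=
        (b.coord j).linearMap_vsub _ _
      rw [vsub_eq_sub, vsub_eq_sub] at h2
      rw [h2, hcoordw, hcoordw, if_neg (Ne.symm k.2), if_pos rfl]
      norm_num
    rw [h1, neg_one_smul]
    abel
  have hdet : LinearMap.det G.linear = μ j := by
    have hM : LinearMap.toMatrix U U G.linear
        = 1 + Matrix.replicateCol Unit (fun i : {k : Fin n // k ≠ j} => -μ i)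
            * Matrix.replicateRow Unit (fun _ : {k : Fin n // k ≠ j} => (1:ℝ)) := by
      ext i k
      rw [LinearMap.toMatrix_apply, hlinU, map_sub]
      simp only [Finsupp.coe_sub, Pi.sub_apply, Basis.repr_self_apply, hreprc,
        Matrix.add_apply, Matrix.one_apply, Matrix.mul_apply, Matrix.replicateCol_apply,
        Matrix.replicateRow_apply, Finset.univ_unique, Finset.sum_singleton, mul_one]
      by_cases h : k = i
      · subst h; simp; ring
      · simp [h, Ne.symm h]
    rw [← LinearMap.det_toMatrix U, hM, Matrix.det_one_add_replicateCol_mul_replicateRow]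
    have hsum' : ∑ i : {k : Fin n // k ≠ j}, μ i = 1 - μ j := by
      have h1 : ∑ i ∈ Finset.univ.erase j, μ (i : Fin n) = ∑ i : {k : Fin n // k ≠ j}, μ i :=
        Finset.sum_subtype _ (by simp) _
      have h2 : ∑ i ∈ Finset.univ.erase j, μ i + μ j = ∑ i, μ i :=
        Finset.sum_erase_add _ _ (Finset.mem_univ j)
      rw [hμ1] at h2
      linarith [h1, h2]
    have hdot : (fun _ : {k : Fin n // k ≠ j} => (1:ℝ)) ⬝ᵥ (fun i => -μ i) = -(1 - μ j) := by
      simp only [dotProduct, one_mul]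
      rw [← hsum']
      simp
    rw [hdot]
    ring
  have hAmeas : Measure.hausdorffMeasure ((n:ℝ)-1) (A j) = ENNReal.ofReal (μ j) * ν s0 := by
    rw [hAim]
    have h1 : Measure.hausdorffMeasure ((n:ℝ)-1)
        (F '' (convexHull ℝ (Set.range (Function.update w j wv))))
        = ν (convexHull ℝ (Set.range (Function.update w j wv))) := by
      rw [hν]
      exact hFiso.hausdorffMeasure_image (Or.inl hd0) _
    rw [h1, hs1, hνG, hdet, abs_of_nonneg (hμ0 j)]
  have hAsub : A j ⊆ convexHull ℝ (Set.range e) := by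
    rw [hA j]
    refine convexHull_min ?_ (convex_convexHull ℝ _)
    rintro x (⟨k, hk, rfl⟩ | rfl)
    · exact subset_convexHull ℝ _ ⟨k, rfl⟩
    · exact (convex_convexHull ℝ _).sum_mem (fun i _ => hμ0 i) hμ1
        (fun i _ => subset_convexHull ℝ _ ⟨i, rfl⟩)
  have hSmeasble : MeasurableSet (convexHull ℝ (Set.range e)) :=
    ((Set.finite_range e).isCompact_convexHull ℝ).isClosed.measurableSet
  rw [Measure.smul_apply, Measure.restrict_apply' hSmeasble,
    Set.inter_eq_self_of_subset_left hAsub, hAmeas, hSmeas, smul_eq_mul,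
    mul_comm (ENNReal.ofReal (μ j)) (ν s0), ← mul_assoc,
    ENNReal.inv_mul_cancel hs0pos.ne' hs0fin.ne, one_mul]
end
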